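/- Let p be an odd prime, e ≥ 1, g an integer not divisible by p, m the multiplicative order of g modulo p, and fix an integer c. Then the congruence g^(x-1+c) ≡ x (mod p^e) has exactly m solutions x in {1, 2, ..., p^e·m}; moreover these m solutions are pairwise distinct modulo m and each is relatively prime to p. -/

import Mathlib

set_option maxHeartbeats 1000000

private lemma welch_pow_one (p : ℕ) (g : ℤ) (m j : ℕ)
    (hgm : (p : ℤ) ∣ g ^ m - 1) (hj : 1 ≤ j) :
    ((g : ZMod (p ^ j))) ^ (m * p ^ (j - 1)) = 1 := by
  have h := dvd_sub_pow_of_dvd_sub (R := ℤ) (p := p) (a := g ^ m) (b := 1) hgm (j - 1)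
  rw [Nat.sub_add_cancel hj, one_pow] at h
  have h2 : (((g ^ m) ^ p ^ (j - 1) - 1 : ℤ) : ZMod (p ^ j)) = 0 := by
    rw [ZMod.intCast_zmod_eq_zero_iff_dvd]
    exact_mod_cast h
  push_cast at h2
  rw [sub_eq_zero] at h2
  rw [pow_mul]
  exact h2

private lemma welch_unit_zpow {G : Type*} [Group G] (V : G) (d : ℕ) (hd : V ^ d = 1)
    (z z' : ℤ) (h : (d : ℤ) ∣ z - z') : V ^ z = V ^ z' := by
  have h1 : (orderOf V : ℤ) ∣ z - z' :=
    dvd_trans (Int.natCast_dvd_natCast.mpr (orderOf_dvd_of_pow_eq_one hd)) h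
  have h2 : V ^ (z - z') = 1 := orderOf_dvd_iff_zpow_eq_one.mp h1
  calc V ^ z = V ^ (z' + (z - z')) := by congr 1; ring
  _ = V ^ z' * V ^ (z - z') := zpow_add V z' (z - z')
  _ = V ^ z' := by rw [h2, mul_one]

private lemma welch_contract (p : ℕ) (hp0 : 0 < p) (e : ℕ) (g : ℤ)
    (m : ℕ) (hgm : (p : ℤ) ∣ g ^ m - 1)
    (u : (ZMod (p ^ e))ˣ) (hu : (u : ZMod (p ^ e)) = (g : ZMod (p ^ e)))
    (j : ℕ) (hj1 : 1 ≤ j) (hje : j ≤ e) (z z' : ℤ)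
    (hdvd : ((m * p ^ (j - 1) : ℕ) : ℤ) ∣ z - z') :
    ((p : ℤ) ^ j) ∣ (((u ^ z : (ZMod (p ^ e))ˣ) : ZMod (p ^ e)).val : ℤ)
      - (((u ^ z' : (ZMod (p ^ e))ˣ) : ZMod (p ^ e)).val : ℤ) := by
  haveI : NeZero (p ^ e) := ⟨pow_ne_zero _ hp0.ne'⟩
  set f : ZMod (p ^ e) →+* ZMod (p ^ j) := ZMod.castHom (pow_dvd_pow p hje) (ZMod (p ^ j))
    with hf
  set V : (ZMod (p ^ j))ˣ := Units.map f.toMonoidHom u with hV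
  have hVg : (V : ZMod (p ^ j)) = (g : ZMod (p ^ j)) := by
    rw [hV, Units.coe_map]
    show f ((u : ZMod (p ^ e))) = _
    rw [hu, map_intCast]
  have hV1 : V ^ (m * p ^ (j - 1)) = 1 := by
    apply Units.ext
    rw [Units.val_pow_eq_pow_val, hVg, Units.val_one]
    exact welch_pow_one p g m j hgm hj1
  have hzz : V ^ z = V ^ z' := by
    apply welch_unit_zpow V (m * p ^ (j - 1)) hV1 z z'
    exact_mod_cast hdvd
  have hmap : ∀ t : ℤ, f (((u ^ t : (ZMod (p ^ e))ˣ) : ZMod (p ^ e))) = ((V ^ t : (ZMod (p ^ j))ˣ) : ZMod (p ^ j)) := by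
    intro t
    rw [hV, ← MonoidHom.map_zpow, Units.coe_map]
    rfl
  have hvalmap : ∀ t : ℤ,
      (((((u ^ t : (ZMod (p ^ e))ˣ) : ZMod (p ^ e)).val : ℤ)) : ZMod (p ^ j))
        = ((V ^ t : (ZMod (p ^ j))ˣ) : ZMod (p ^ j)) := by
    intro t
    rw [← hmap t, ← map_intCast f]
    congr 1
    push_cast
    simp [ZMod.natCast_val, ZMod.cast_id]
  have h0 : (((((u ^ z : (ZMod (p ^ e))ˣ) : ZMod (p ^ e)).val : ℤ)
      - (((u ^ z' : (ZMod (p ^ e))ˣ) : ZMod (p ^ e)).val : ℤ) : ℤ) : ZMod (p ^ j)) = 0 := by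
    push_cast
    rw [sub_eq_zero]
    have h1 := hvalmap z
    have h2 := hvalmap z'
    push_cast at h1 h2
    rw [h1, h2, hzz]
  rw [ZMod.intCast_zmod_eq_zero_iff_dvd] at h0
  exact_mod_cast h0

private lemma welch_main (p : ℕ) (hp : p.Prime) (e : ℕ) (he : 1 ≤ e) (g : ℤ)
    (m : ℕ) (hm0 : 0 < m) (hmp : Nat.Coprime m p) (hgm : (p : ℤ) ∣ g ^ m - 1)
    (u : (ZMod (p ^ e))ˣ) (hu : (u : ZMod (p ^ e)) = (g : ZMod (p ^ e)))
    (c : ℤ) :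
    let S : Set ℤ := {x : ℤ | 1 ≤ x ∧ x ≤ (p : ℤ) ^ e * m ∧
      (↑(u ^ (x - 1 + c)) : ZMod (p ^ e)) = (x : ZMod (p ^ e))}
    S.ncard = m ∧
    (∀ x ∈ S, ∀ y ∈ S, x ≡ y [ZMOD (m : ℤ)] → x = y) ∧
    (∀ x ∈ S, Int.gcd x p = 1) := by
  intro S
  have hp0 : 0 < p := hp.pos
  haveI : NeZero (p ^ e) := ⟨pow_ne_zero _ hp0.ne'⟩
  haveI : NeZero m := ⟨hm0.ne'⟩
  -- integer coprimality
  have hcop : ∀ j : ℕ, IsCoprime (m : ℤ) ((p : ℤ) ^ j) := by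
    intro j
    have := Nat.isCoprime_iff_coprime.mpr (hmp.pow_right j)
    exact_mod_cast this
  -- the lifted value of u ^ (x - 1 + c)
  set w : ℤ → ℤ := fun x => (((u ^ (x - 1 + c) : (ZMod (p ^ e))ˣ) : ZMod (p ^ e)).val : ℤ)
    with hwdef
  have hwcast : ∀ x : ℤ, ((w x : ℤ) : ZMod (p ^ e))
      = ((u ^ (x - 1 + c) : (ZMod (p ^ e))ˣ) : ZMod (p ^ e)) := by
    intro x
    rw [hwdef]
    push_cast
    simp [ZMod.natCast_val, ZMod.cast_id]
  -- contraction property of w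
  have hcontr : ∀ (j : ℕ), 1 ≤ j → j ≤ e → ∀ x y : ℤ,
      ((m * p ^ (j - 1) : ℕ) : ℤ) ∣ x - y → ((p : ℤ) ^ j) ∣ w x - w y := by
    intro j hj1 hje x y hxy
    have hd : ((m * p ^ (j - 1) : ℕ) : ℤ) ∣ (x - 1 + c) - (y - 1 + c) := by
      have : (x - 1 + c) - (y - 1 + c) = x - y := by ring
      rw [this]; exact hxy
    exact welch_contract p hp0 e g m hgm u hu j hj1 hje _ _ hd
  -- a solution (of the congruence) is congruent to its w-value mod p^e
  have hsolw : ∀ x : ℤ,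
      (↑(u ^ (x - 1 + c)) : ZMod (p ^ e)) = (x : ZMod (p ^ e)) → ((p : ℤ) ^ e) ∣ w x - x := by
    intro x hx
    have h0 : ((w x - x : ℤ) : ZMod (p ^ e)) = 0 := by
      push_cast
      rw [sub_eq_zero]
      have := hwcast x
      push_cast at this
      rw [this, hx]
    rw [ZMod.intCast_zmod_eq_zero_iff_dvd] at h0
    exact_mod_cast h0
  -- injectivity modulo m implies equality modulo m * p^e
  have key : ∀ x : ℤ, (↑(u ^ (x - 1 + c)) : ZMod (p ^ e)) = (x : ZMod (p ^ e)) →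
      ∀ y : ℤ, (↑(u ^ (y - 1 + c)) : ZMod (p ^ e)) = (y : ZMod (p ^ e)) →
      (m : ℤ) ∣ x - y → ((m * p ^ e : ℕ) : ℤ) ∣ x - y := by
    intro x hx y hy h0
    have hsolx := hsolw x hx
    have hsoly := hsolw y hy
    have step : ∀ s : ℕ, s ≤ e → ((m * p ^ s : ℕ) : ℤ) ∣ x - y := by
      intro s
      induction s with
      | zero => intro _; simpa using h0
      | succ n ih =>
        intro hns
        have h1 := ih (by omega)
        have h2 : ((p : ℤ) ^ (n + 1)) ∣ w x - w y :=
          hcontr (n + 1) (by omega) hns x y (by simpa using h1)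
        have h3 : ((p : ℤ) ^ (n + 1)) ∣ x - y := by
          have hx' : ((p : ℤ) ^ (n + 1)) ∣ w x - x :=
            dvd_trans (pow_dvd_pow _ hns) hsolx
          have hy' : ((p : ℤ) ^ (n + 1)) ∣ w y - y :=
            dvd_trans (pow_dvd_pow _ hns) hsoly
          have : x - y = (w x - x) * (-1) + (w x - w y) + (w y - y) := by ring
          rw [this]
          exact dvd_add (dvd_add (hx'.mul_right _) h2) hy'
        have h4 := (hcop (n + 1)).mul_dvd h0 h3
        push_cast
        exact h4
    exact step e le_rfl
  have inj : ∀ x ∈ S, ∀ y ∈ S, (m : ℤ) ∣ x - y → x = y := by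
    intro x hxS y hyS h0
    obtain ⟨hx1, hx2, hx3⟩ := hxS
    obtain ⟨hy1, hy2, hy3⟩ := hyS
    have h1 := key x hx3 y hy3 h0
    have hTe : ((m * p ^ e : ℕ) : ℤ) = (p : ℤ) ^ e * m := by push_cast; ring
    rw [hTe] at h1
    have h2 : x - y = 0 := by
      apply Int.eq_zero_of_abs_lt_dvd h1
      rw [abs_lt]
      constructor <;> nlinarith [hx1, hx2, hy1, hy2]
    linarith
  -- Bezout
  obtain ⟨A, B, hAB⟩ := hcop e
  -- the CRT-combining map
  set G : ℤ → ℤ → ℤ := fun r x => r + (m : ℤ) * (A * (w x - r)) with hGdef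
  have hGm : ∀ r x : ℤ, (m : ℤ) ∣ G r x - r := by
    intro r x
    exact ⟨A * (w x - r), by rw [hGdef]; ring⟩
  have hGp : ∀ r x : ℤ, ((p : ℤ) ^ e) ∣ G r x - w x := by
    intro r x
    refine ⟨-(B * (w x - r)), ?_⟩
    rw [hGdef]
    linear_combination (w x - r) * hAB
  have hGstep : ∀ r x y : ℤ, ∀ s : ℕ, s + 1 ≤ e →
      ((m * p ^ s : ℕ) : ℤ) ∣ x - y → ((m * p ^ (s + 1) : ℕ) : ℤ) ∣ G r x - G r y := by
    intro r x y s hs h1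
    have h2 : ((p : ℤ) ^ (s + 1)) ∣ w x - w y :=
      hcontr (s + 1) (by omega) hs x y (by simpa using h1)
    obtain ⟨t, ht⟩ := h2
    refine ⟨A * t, ?_⟩
    have hG2 : G r x - G r y = (m : ℤ) * (A * (w x - w y)) := by rw [hGdef]; ring
    rw [hG2, ht]
    push_cast
    ring
  -- existence of approximate fixed points, by induction
  have hQ : ∀ r : ℤ, ∀ k : ℕ, k ≤ e →
      ∃ x : ℤ, (m : ℤ) ∣ x - r ∧ ((m * p ^ k : ℕ) : ℤ) ∣ G r x - x := by
    intro r k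
    induction k with
    | zero =>
      intro _
      refine ⟨r, by simp, ?_⟩
      simpa using hGm r r
    | succ n ih =>
      intro hne
      obtain ⟨x, hx1, hx2⟩ := ih (by omega)
      refine ⟨G r x, hGm r x, ?_⟩
      exact hGstep r (G r x) x n hne hx2
  -- exact fixed points
  have hfix : ∀ r : ℤ, ∃ x : ℤ, (m : ℤ) ∣ x - r ∧
      (↑(u ^ (x - 1 + c)) : ZMod (p ^ e)) = (x : ZMod (p ^ e)) := by
    intro r
    obtain ⟨x, hx1, hx2⟩ := hQ r e le_rfl
    refine ⟨x, hx1, ?_⟩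
    have h2 : ((p : ℤ) ^ e) ∣ G r x - x := by
      obtain ⟨t, ht⟩ := hx2
      refine ⟨(m : ℤ) * t, ?_⟩
      rw [ht]; push_cast; ring
    have h3 := hGp r x
    have h4 : ((p : ℤ) ^ e) ∣ w x - x := by
      have hh : w x - x = (G r x - x) - (G r x - w x) := by ring
      rw [hh]
      exact dvd_sub h2 h3
    have h5 : ((w x - x : ℤ) : ZMod (p ^ e)) = 0 := by
      rw [ZMod.intCast_zmod_eq_zero_iff_dvd]
      exact_mod_cast h4
    push_cast at h5
    rw [sub_eq_zero] at h5
    have h6 := hwcast x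
    push_cast at h6
    rw [← h6, h5]
  -- order of u divides m * p^(e-1), hence m * p^e
  have hordu : ∀ z z' : ℤ, ((m * p ^ (e - 1) : ℕ) : ℤ) ∣ z - z' → u ^ z = u ^ z' := by
    intro z z' hzz
    have hu1 : u ^ (m * p ^ (e - 1)) = 1 := by
      apply Units.ext
      rw [Units.val_pow_eq_pow_val, hu, Units.val_one]
      exact welch_pow_one p g m e hgm he
    apply welch_unit_zpow u (m * p ^ (e - 1)) hu1 z z'
    exact_mod_cast hzz
  -- bounded solutions: for every r there is a member of S congruent to r mod m
  have hsol : ∀ r : ℤ, ∃ x : ℤ, x ∈ S ∧ (m : ℤ) ∣ x - r := by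
    intro r
    obtain ⟨x, hx1, hx2⟩ := hfix r
    set T : ℤ := (p : ℤ) ^ e * m with hTdef
    have hT0 : 0 < T := by positivity
    set y : ℤ := (x - 1) % T + 1 with hydef
    have hy1 : 1 ≤ y := by
      have := Int.emod_nonneg (x - 1) hT0.ne'
      omega
    have hy2 : y ≤ T := by
      have := Int.emod_lt_of_pos (x - 1) hT0
      omega
    have hyx : T ∣ x - y := by
      refine ⟨(x - 1) / T, ?_⟩
      have := Int.mul_ediv_add_emod (x - 1) T
      rw [hydef]
      linarith
    have hpe_dvd : ((p : ℤ) ^ e) ∣ x - y := dvd_trans ⟨(m : ℤ), rfl⟩ hyx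
    have hm_dvd : (m : ℤ) ∣ x - y := dvd_trans ⟨(p : ℤ) ^ e, by rw [hTdef]; ring⟩ hyx
    have hmpe1 : ((m * p ^ (e - 1) : ℕ) : ℤ) ∣ x - y := by
      refine dvd_trans ?_ hyx
      refine ⟨(p : ℤ), ?_⟩
      rw [hTdef]
      push_cast
      have hpe : (p : ℤ) ^ e = (p : ℤ) ^ (e - 1) * (p : ℤ) := by
        rw [← pow_succ, Nat.sub_add_cancel he]
      rw [hpe]; ring
    have heq : (↑(u ^ (y - 1 + c)) : ZMod (p ^ e)) = (y : ZMod (p ^ e)) := by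
      have h1 : u ^ (y - 1 + c) = u ^ (x - 1 + c) := by
        apply hordu
        have hh : (y - 1 + c) - (x - 1 + c) = -(x - y) := by ring
        rw [hh]
        exact hmpe1.neg_right
      have h2 : ((x - y : ℤ) : ZMod (p ^ e)) = 0 := by
        rw [ZMod.intCast_zmod_eq_zero_iff_dvd]
        exact_mod_cast hpe_dvd
      push_cast at h2
      rw [sub_eq_zero] at h2
      rw [h1, hx2, h2]
    refine ⟨y, ⟨hy1, by rw [← hTdef]; exact hy2, heq⟩, ?_⟩
    have hh : y - r = (x - r) - (x - y) := by ring
    rw [hh]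
    exact dvd_sub hx1 hm_dvd
  -- finish
  have hvalcast : ∀ r : ZMod m, ((r.val : ℤ) : ZMod m) = r := by
    intro r
    push_cast
    simp [ZMod.natCast_val, ZMod.cast_id]
  choose sol hsolS hsolm using hsol
  refine ⟨?_, ?_, ?_⟩
  · -- cardinality
    set F : ZMod m → S := fun r => ⟨sol (r.val : ℤ), hsolS _⟩ with hF
    have hbij : Function.Bijective F := by
      constructor
      · intro r r' hrr
        have hval : sol ((r.val : ℤ)) = sol ((r'.val : ℤ)) := congrArg Subtype.val hrr
        have h1 : (m : ℤ) ∣ (r.val : ℤ) - (r'.val : ℤ) := by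
          have e1 := hsolm ((r.val : ℤ))
          have e2 := hsolm ((r'.val : ℤ))
          have hh : (r.val : ℤ) - (r'.val : ℤ)
              = (sol ((r'.val : ℤ)) - (r'.val : ℤ)) - (sol ((r.val : ℤ)) - (r.val : ℤ))
                + (sol ((r.val : ℤ)) - sol ((r'.val : ℤ))) := by ring
          have hone : (m : ℤ) ∣ (sol ((r'.val : ℤ)) - (r'.val : ℤ))
              - (sol ((r.val : ℤ)) - (r.val : ℤ))
              + (sol ((r.val : ℤ)) - sol ((r'.val : ℤ))) :=
            dvd_add (dvd_sub e2 e1) (by rw [hval, sub_self]; exact dvd_zero _)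
          rw [hh]
          exact hone
        have h2 : (((r.val : ℤ)) : ZMod m) = (((r'.val : ℤ)) : ZMod m) := by
          rw [ZMod.intCast_eq_intCast_iff]
          exact (Int.modEq_iff_dvd.mpr (by simpa using h1.neg_right.neg_left)).symm.symm
        rw [hvalcast, hvalcast] at h2
        exact h2
      · rintro ⟨x, hxS⟩
        refine ⟨((x : ZMod m)), ?_⟩
        apply Subtype.ext
        show sol _ = x
        apply inj _ (hsolS _) _ hxS
        set z : ℤ := (((x : ZMod m)).val : ℤ) with hz
        have h1 : (z : ZMod m) = ((x : ZMod m)) := hvalcast _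
        have h2 : (m : ℤ) ∣ z - x := by
          rw [ZMod.intCast_eq_intCast_iff] at h1
          have := Int.ModEq.dvd h1
          simpa using this.neg_right.neg_left
        have h3 := hsolm z
        have hh : sol z - x = (sol z - z) + (z - x) := by ring
        rw [hh]
        exact dvd_add h3 h2
    have : Nat.card S = m := by
      rw [← Nat.card_zmod m]
      exact Nat.card_congr (Equiv.ofBijective F hbij).symm
    rw [← Nat.card_coe_set_eq]
    exact this
  · -- distinctness mod m
    intro x hx y hy hcong
    apply inj x hx y hy
    have := Int.ModEq.dvd hcong
    simpa using this.neg_right.neg_left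
  · -- coprimality
    intro x hx
    obtain ⟨hx1, hx2, hx3⟩ := hx
    haveI : Fact (1 < p) := ⟨hp.one_lt⟩
    have hpd : p ∣ p ^ e := dvd_pow_self p (by omega)
    set f' : ZMod (p ^ e) →+* ZMod p := ZMod.castHom hpd (ZMod p) with hf'
    have hux : IsUnit ((x : ZMod p)) := by
      have h1 : ((x : ZMod p)) = f' ((x : ZMod (p ^ e))) := by rw [map_intCast]
      rw [h1, ← hx3]
      exact (Units.map f'.toMonoidHom (u ^ (x - 1 + c))).isUnit
    have hne : ((x : ZMod p)) ≠ 0 := hux.ne_zero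
    have hnd : ¬ ((p : ℤ) ∣ x) := by
      intro hdvd
      apply hne
      rw [ZMod.intCast_zmod_eq_zero_iff_dvd]
      exact_mod_cast hdvd
    have h1 : Int.gcd x (p : ℤ) ∣ p := by
      have h2 : ((Int.gcd x (p : ℤ) : ℕ) : ℤ) ∣ ((p : ℕ) : ℤ) := Int.gcd_dvd_right _ _
      exact_mod_cast h2
    rcases hp.eq_one_or_self_of_dvd _ h1 with h | h
    · exact h
    · exfalso
      apply hnd
      have h2 : ((Int.gcd x (p : ℤ) : ℕ) : ℤ) ∣ x := Int.gcd_dvd_left _ _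
      rw [h] at h2
      exact_mod_cast h2
/-- For fixed `c`, the Welch equation `g^(x-1+c) ≡ x (mod p^e)` has exactly `m`
solutions `x ∈ {1, …, p^e·m}`, pairwise distinct modulo `m` and coprime to `p`. -/
theorem welch_count_fixed_c (p : ℕ) (hp : p.Prime) (hodd : p ≠ 2)
    (e : ℕ) (he : 1 ≤ e) (g : ℤ) (hg : ¬ (p : ℤ) ∣ g)
    (m : ℕ) (hm : m = orderOf (g : ZMod p))
    (u : (ZMod (p ^ e))ˣ) (hu : (u : ZMod (p ^ e)) = (g : ZMod (p ^ e)))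
    (c : ℤ) (S : Set ℤ)
    (hS : S = {x : ℤ | 1 ≤ x ∧ x ≤ (p : ℤ) ^ e * m ∧
      (↑(u ^ (x - 1 + c)) : ZMod (p ^ e)) = (x : ZMod (p ^ e))}) :
    S.ncard = m ∧
    (∀ x ∈ S, ∀ y ∈ S, x ≡ y [ZMOD (m : ℤ)] → x = y) ∧
    (∀ x ∈ S, Int.gcd x p = 1) := by
  haveI : Fact p.Prime := ⟨hp⟩
  have hgz : (g : ZMod p) ≠ 0 := by
    rw [Ne, ZMod.intCast_zmod_eq_zero_iff_dvd]; exact hg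
  have hpow : (g : ZMod p) ^ (p - 1) = 1 := ZMod.pow_card_sub_one_eq_one hgz
  have hm0 : 0 < m := by
    rw [hm]
    exact (isOfFinOrder_iff_pow_eq_one.mpr
      ⟨p - 1, by have := hp.one_lt; omega, hpow⟩).orderOf_pos
  have hdvd : m ∣ p - 1 := by rw [hm]; exact orderOf_dvd_of_pow_eq_one hpow
  have hmp : Nat.Coprime m p := by
    have h1 : Nat.Coprime (p - 1) p := by
      have h2 : p - 1 + 1 = p := by have := hp.one_lt; omega
      rw [← h2]
      simp
    exact Nat.Coprime.coprime_dvd_left hdvd h1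
  have hgm : (p : ℤ) ∣ g ^ m - 1 := by
    have h1 : (g : ZMod p) ^ m = 1 := by rw [hm]; exact pow_orderOf_eq_one _
    have h2 : ((g ^ m - 1 : ℤ) : ZMod p) = 0 := by push_cast; rw [h1, sub_self]
    rwa [ZMod.intCast_zmod_eq_zero_iff_dvd] at h2
  have hmain := welch_main p hp e he g m hm0 hmp hgm u hu c
  rw [hS]
  exact hmain
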